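/- Let E be a finite-dimensional complex vector space, let α : E → E be a linear map whose spectrum is contained in Σ₁, and let Ẽ ⊆ E be a linear subspace. Then α(Ẽ) ⊆ Ẽ if and only if exp(2πi·α)(Ẽ) ⊆ Ẽ. -/

import Mathlib

open Complex

noncomputable section

/-- The set Σ: complex numbers `α` with `-1 ≤ Re α ≤ 0`, `Im α ≥ 0` if `Re α = -1`,
and `Im α < 0` if `Re α = 0`. -/
def SigmaSet : Set ℂ :=
  {α : ℂ | -1 ≤ α.re ∧ α.re ≤ 0 ∧ (α.re = -1 → 0 ≤ α.im) ∧ (α.re = 0 → α.im < 0)}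

/-- The set Σ₁ := Σ + 1. -/
def Sigma1 : Set ℂ := {α : ℂ | α - 1 ∈ SigmaSet}

/-- The constant `2πi`. -/
def twoPiI : ℂ := 2 * Real.pi * Complex.I

/-- The exponential `exp(2πi·f)` of an endomorphism `f`. -/
def expEnd {E : Type*} [NormedAddCommGroup E] [NormedSpace ℂ E] (f : E →L[ℂ] E) :
    E →L[ℂ] E :=
  NormedSpace.exp (twoPiI • f)

/-- The power series `ψ(A) := ∑_{k=1}^∞ ((2πi)^k / k!) A^(k-1)`. It satisfies
`A·ψ(A) = ψ(A)·A = exp(2πi·A) − Id`. -/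
def psiEnd {E : Type*} [NormedAddCommGroup E] [NormedSpace ℂ E] (A : E →L[ℂ] E) :
    E →L[ℂ] E :=
  ∑' k : ℕ, ((twoPiI ^ (k + 1) / (Nat.factorial (k + 1) : ℂ)) • A ^ k)
section Aux

variable {E : Type*} [NormedAddCommGroup E] [NormedSpace ℂ E] [FiniteDimensional ℂ E]

instance : CompleteSpace E := FiniteDimensional.complete ℂ E

lemma twoPiI_ne_zero : twoPiI ≠ 0 := by
  simp [twoPiI, Real.pi_ne_zero, Complex.I_ne_zero, Complex.ofReal_ne_zero]

lemma hasSum_expEnd_apply (β : E →L[ℂ] E) (z : E) :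
    HasSum (fun n : ℕ => ((n.factorial : ℂ))⁻¹ • ((β ^ n) z)) (NormedSpace.exp β z) := by
  have h := NormedSpace.exp_series_hasSum_exp' (𝕂 := ℂ) β
  have h2 := h.mapL (ContinuousLinearMap.apply ℂ E z)
  simpa using h2

lemma expEnd_apply_eq_sum (α : E →L[ℂ] E) (l : ℂ) {k : ℕ} {z : E}
    (hz : ((α - l • (1 : E →L[ℂ] E)) ^ k) z = 0) :
    expEnd α z = Complex.exp (twoPiI * l) •
      ∑ m ∈ Finset.range k,
        ((m.factorial : ℂ))⁻¹ • (((twoPiI • (α - l • (1 : E →L[ℂ] E))) ^ m) z) := by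
  set Y := twoPiI • (α - l • (1 : E →L[ℂ] E)) with hYdef
  have hY : ∀ n, k ≤ n → (Y ^ n) z = 0 := by
    intro n hn
    have h1 : ((α - l • (1 : E →L[ℂ] E)) ^ n) z = 0 := by
      rw [show n = (n - k) + k from (Nat.sub_add_cancel hn).symm, pow_add,
        ContinuousLinearMap.mul_apply, hz, map_zero]
    rw [hYdef, smul_pow, ContinuousLinearMap.smul_apply, h1, smul_zero]
  have hsplit : twoPiI • α = (twoPiI * l) • (1 : E →L[ℂ] E) + Y := by
    rw [hYdef, smul_sub, smul_smul]
    abel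
  have hcomm : Commute ((twoPiI * l) • (1 : E →L[ℂ] E)) Y :=
    ((Commute.one_left Y).smul_left _)
  have h1 : NormedSpace.exp ((twoPiI * l) • (1 : E →L[ℂ] E))
      = Complex.exp (twoPiI * l) • (1 : E →L[ℂ] E) := by
    rw [← Algebra.algebraMap_eq_smul_one, ← NormedSpace.algebraMap_exp_comm,
      ← Complex.exp_eq_exp_ℂ, Algebra.algebraMap_eq_smul_one]
  have hsum := hasSum_expEnd_apply Y z
  have htr : NormedSpace.exp Y z
      = ∑ m ∈ Finset.range k, ((m.factorial : ℂ))⁻¹ • ((Y ^ m) z) := by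
    rw [← hsum.tsum_eq]
    exact tsum_eq_sum (fun n hn => by rw [hY n (by simpa using hn), smul_zero])
  let +nondep : NormedAlgebra ℚ (E →L[ℂ] E) := .restrictScalars ℚ ℂ _
  rw [expEnd, hsplit, NormedSpace.exp_add_of_commute hcomm, ContinuousLinearMap.mul_apply, h1,
    ContinuousLinearMap.smul_apply, ContinuousLinearMap.one_apply, htr]

end Aux

section Aux2

variable {E : Type*} [NormedAddCommGroup E] [NormedSpace ℂ E] [FiniteDimensional ℂ E]

lemma pow_apply_pow_apply (β : E →L[ℂ] E) (a b : ℕ) (z : E) :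
    (β ^ a) ((β ^ b) z) = (β ^ (a + b)) z := by
  rw [pow_add, ContinuousLinearMap.mul_apply]

lemma pow_apply_zero_of (β : E →L[ℂ] E) {k : ℕ} {z : E} (hz : (β ^ k) z = 0)
    {n : ℕ} (hn : k ≤ n) : (β ^ n) z = 0 := by
  rw [show n = (n - k) + k from (Nat.sub_add_cancel hn).symm, ← pow_apply_pow_apply, hz, map_zero]

/-- (B - μ)^m kills whatever (α - λ)^m kills. -/
lemma exp_sub_pow_apply_zero (α : E →L[ℂ] E) (l : ℂ) :
    ∀ (m : ℕ) (z : E), ((α - l • (1 : E →L[ℂ] E)) ^ m) z = 0 →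
      ((expEnd α - Complex.exp (twoPiI * l) • (1 : E →L[ℂ] E)) ^ m) z = 0 := by
  intro m
  induction m with
  | zero => intro z hz; simpa using hz
  | succ m ih =>
    intro z hz
    set β := α - l • (1 : E →L[ℂ] E) with hβ
    set T := expEnd α - Complex.exp (twoPiI * l) • (1 : E →L[ℂ] E) with hT
    -- compute T z
    have hstar := expEnd_apply_eq_sum α l hz
    have hTz2 : T z = Complex.exp (twoPiI * l) •
        ∑ i ∈ Finset.range m,
          (((i+1).factorial : ℂ))⁻¹ • (((twoPiI • β) ^ (i+1)) z) := by
      rw [hT, ContinuousLinearMap.sub_apply, ContinuousLinearMap.smul_apply,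
        ContinuousLinearMap.one_apply, hstar, Finset.sum_range_succ']
      simp [smul_add, hβ]
    have hz' : (β ^ m) (T z) = 0 := by
      rw [hTz2, map_smul, map_sum]
      have : ∀ i ∈ Finset.range m,
          (β ^ m) ((((i+1).factorial : ℂ))⁻¹ • (((twoPiI • β) ^ (i+1)) z)) = 0 := by
        intro i _
        rw [map_smul, smul_pow, ContinuousLinearMap.smul_apply, map_smul,
          pow_apply_pow_apply]
        rw [pow_apply_zero_of β hz (by omega), smul_zero, smul_zero]
      rw [Finset.sum_congr rfl this]
      simp
    have := ih (T z) hz'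
    rw [pow_succ, ContinuousLinearMap.mul_apply]
    exact this

end Aux2

section Aux3

variable {E : Type*} [NormedAddCommGroup E] [NormedSpace ℂ E] [FiniteDimensional ℂ E]

set_option maxHeartbeats 1000000 in
lemma alpha_apply_mem (α : E →L[ℂ] E) (V : Submodule ℂ E)
    (hV : ∀ x ∈ V, expEnd α x ∈ V) (l : ℂ) {k : ℕ} {y : E} (hy : y ∈ V)
    (hk : ((α - l • (1 : E →L[ℂ] E)) ^ k) y = 0) : α y ∈ V := by
  set β := α - l • (1 : E →L[ℂ] E) with hβdef
  set Y := twoPiI • β with hYdef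
  set μ := Complex.exp (twoPiI * l) with hμdef
  set T := expEnd α - μ • (1 : E →L[ℂ] E) with hTdef
  have hμ : μ ≠ 0 := Complex.exp_ne_zero _
  have hT : ∀ z ∈ V, T z ∈ V := by
    intro z hz
    rw [hTdef, ContinuousLinearMap.sub_apply, ContinuousLinearMap.smul_apply,
      ContinuousLinearMap.one_apply]
    exact sub_mem (hV z hz) (V.smul_mem _ hz)
  have hTpow : ∀ (m : ℕ) (z : E), z ∈ V → (T ^ m) z ∈ V := by
    intro m
    induction m with
    | zero => intro z hz; simpa using hz
    | succ m ih =>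
      intro z hz
      rw [pow_succ, ContinuousLinearMap.mul_apply]
      exact ih _ (hT z hz)
  -- nilpotency of β on iterates of Y applied to y
  have hβnil : ∀ (m : ℕ), (β ^ k) ((Y ^ m) y) = 0 := by
    intro m
    rw [hYdef, smul_pow, ContinuousLinearMap.smul_apply, map_smul, pow_apply_pow_apply,
      show k + m = m + k by omega, ← pow_apply_pow_apply, hk, map_zero, smul_zero]
  have hzero : ∀ n, k ≤ n → (Y ^ n) y = 0 := by
    intro n hn
    rw [hYdef, smul_pow, ContinuousLinearMap.smul_apply, pow_apply_zero_of β hk hn, smul_zero]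
  -- Lemma F
  have F : ∀ z : E, (β ^ k) z = 0 →
      T z - μ • (Y z) ∈ Submodule.span ℂ {w | ∃ m, 1 < m ∧ w = (Y ^ m) z} := by
    intro z hz
    have hz2 : (β ^ (k + 1 + 1)) z = 0 := pow_apply_zero_of β hz (by omega)
    have hstar := expEnd_apply_eq_sum α l hz2
    rw [← hβdef, ← hYdef] at hstar
    have hTz : T z - μ • (Y z) = μ • ∑ i ∈ Finset.range k,
        (((i + 1 + 1).factorial : ℂ))⁻¹ • ((Y ^ (i + 1 + 1)) z) := by
      rw [hTdef, ContinuousLinearMap.sub_apply, ContinuousLinearMap.smul_apply,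
        ContinuousLinearMap.one_apply, hstar, Finset.sum_range_succ', Finset.sum_range_succ']
      simp only [zero_add, pow_zero, ContinuousLinearMap.one_apply, pow_one,
        Nat.factorial_zero, Nat.factorial_one, Nat.cast_one, inv_one, one_smul, smul_add,
        ← hμdef]
      abel
    rw [hTz]
    refine Submodule.smul_mem _ _ (Submodule.sum_mem _ fun i _ => ?_)
    exact Submodule.smul_mem _ _ (Submodule.subset_span ⟨i + 1 + 1, by omega, rfl⟩)
  -- the filtration spans
  have hspan : ∀ (m j : ℕ), j ≤ m →
      Submodule.span ℂ {w | ∃ m', 1 < m' ∧ w = (Y ^ m') ((Y ^ m) y)} ≤ Submodule.span ℂ {w | ∃ m, j + 1 < m ∧ w = (Y ^ m) y} := by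
    intro m j hjm
    rw [Submodule.span_le]
    rintro w ⟨m', hm', rfl⟩
    rw [pow_apply_pow_apply]
    exact Submodule.subset_span ⟨m' + m, by omega, rfl⟩
  -- main claim
  have claim : ∀ j, 1 ≤ j → (T ^ j) y - (μ ^ j) • ((Y ^ j) y) ∈ Submodule.span ℂ {w | ∃ m, j < m ∧ w = (Y ^ m) y} := by
    intro j hj
    induction j, hj using Nat.le_induction with
    | base => simpa [pow_one] using F y hk
    | succ j hj ih =>
      have hmapT : ∀ w ∈ Submodule.span ℂ {w | ∃ m, j < m ∧ w = (Y ^ m) y}, T w ∈ Submodule.span ℂ {w | ∃ m, j + 1 < m ∧ w = (Y ^ m) y} := by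
        intro w hw
        have hle : Submodule.map (T : E →ₗ[ℂ] E) (Submodule.span ℂ {w | ∃ m, j < m ∧ w = (Y ^ m) y}) ≤ Submodule.span ℂ {w | ∃ m, j + 1 < m ∧ w = (Y ^ m) y} := by
          rw [Submodule.map_span_le]
          rintro w' ⟨m, hm, rfl⟩
          have hYm : Y ((Y ^ m) y) = (Y ^ (1 + m)) y := by
            rw [← pow_apply_pow_apply, pow_one]
          have h1 : T ((Y ^ m) y) - μ • (Y ((Y ^ m) y)) ∈ Submodule.span ℂ {w | ∃ m, j + 1 < m ∧ w = (Y ^ m) y} :=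
            hspan m j (by omega) (F ((Y ^ m) y) (hβnil m))
          have h2 : μ • (Y ((Y ^ m) y)) ∈ Submodule.span ℂ {w | ∃ m, j + 1 < m ∧ w = (Y ^ m) y} := by
            rw [hYm]
            exact Submodule.smul_mem _ _ (Submodule.subset_span ⟨1 + m, by omega, rfl⟩)
          have := add_mem h1 h2
          simpa using this
        exact hle ⟨w, hw, rfl⟩
      have e1 : (T ^ (j + 1)) y = T ((T ^ j) y) := by
        rw [pow_succ', ContinuousLinearMap.mul_apply]
      have e2 : (Y ^ (j + 1)) y = Y ((Y ^ j) y) := by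
        rw [pow_succ', ContinuousLinearMap.mul_apply]
      have key : (T ^ (j + 1)) y - (μ ^ (j + 1)) • ((Y ^ (j + 1)) y)
          = T ((T ^ j) y - (μ ^ j) • ((Y ^ j) y))
            + (μ ^ j) • (T ((Y ^ j) y) - μ • (Y ((Y ^ j) y))) := by
        rw [e1, e2, map_sub, map_smul, smul_sub, smul_smul, ← pow_succ]
        abel
      rw [key]
      exact add_mem (hmapT _ ih)
        (Submodule.smul_mem _ _ (hspan j j le_rfl (F ((Y ^ j) y) (hβnil j))))
  -- downward induction
  have Q : ∀ (d j : ℕ), 1 ≤ j → k ≤ j + d → (Y ^ j) y ∈ V := by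
    intro d
    induction d with
    | zero => intro j _ hkj; rw [hzero j (by omega)]; exact zero_mem V
    | succ d ihd =>
      intro j hj hkj
      have hsp : Submodule.span ℂ {w | ∃ m, j < m ∧ w = (Y ^ m) y} ≤ V := by
        rw [Submodule.span_le]
        rintro w ⟨m, hm, rfl⟩
        exact ihd m (by omega) (by omega)
      have h1 : (T ^ j) y - (μ ^ j) • ((Y ^ j) y) ∈ V := hsp (claim j hj)
      have h2 : (μ ^ j) • ((Y ^ j) y) ∈ V := by
        have := sub_mem (hTpow j y hy) h1
        simpa using this
      have h3 := V.smul_mem (μ ^ j)⁻¹ h2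
      rwa [smul_smul, inv_mul_cancel₀ (pow_ne_zero _ hμ), one_smul] at h3
  have hY1 : Y y ∈ V := by
    have := Q k 1 le_rfl (by omega)
    simpa [pow_one] using this
  have hαy : α y = l • y + twoPiI⁻¹ • (Y y) := by
    rw [hYdef, hβdef, ContinuousLinearMap.smul_apply, ContinuousLinearMap.sub_apply,
      ContinuousLinearMap.smul_apply, ContinuousLinearMap.one_apply, smul_smul,
      inv_mul_cancel₀ twoPiI_ne_zero, one_smul]
    abel
  rw [hαy]
  exact add_mem (V.smul_mem _ hy) (V.smul_mem _ hY1)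

end Aux3

section Aux4

/-- Injectivity of `λ ↦ exp(2πiλ)` on `Σ₁`. -/
lemma sigma1_exp_injOn {l₁ l₂ : ℂ} (h₁ : l₁ ∈ Sigma1) (h₂ : l₂ ∈ Sigma1)
    (h : Complex.exp (twoPiI * l₁) = Complex.exp (twoPiI * l₂)) : l₁ = l₂ := by
  rw [Complex.exp_eq_exp_iff_exists_int] at h
  obtain ⟨n, hn⟩ := h
  have hn' : l₁ = l₂ + n := by
    have h2 : twoPiI * l₁ = twoPiI * (l₂ + n) := by
      rw [hn, mul_add, twoPiI]; ring
    exact mul_left_cancel₀ twoPiI_ne_zero h2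
  obtain ⟨ha₁, hb₁, hc₁, hd₁⟩ := h₁
  obtain ⟨ha₂, hb₂, hc₂, hd₂⟩ := h₂
  simp only [Complex.sub_re, Complex.one_re, Complex.sub_im, Complex.one_im, sub_zero] at *
  have hre : l₁.re = l₂.re + n := by rw [hn']; simp
  have him : l₁.im = l₂.im := by rw [hn']; simp
  have hnb : -1 ≤ (n : ℝ) ∧ (n : ℝ) ≤ 1 := by constructor <;> nlinarith
  have hnn : n = -1 ∨ n = 0 ∨ n = 1 := by
    have h1 : (-1 : ℤ) ≤ n := by exact_mod_cast hnb.1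
    have h2 : n ≤ (1 : ℤ) := by exact_mod_cast hnb.2
    omega
  rcases hnn with rfl | rfl | rfl
  · exfalso
    have e1 : l₁.re = 0 := by push_cast at hre; nlinarith
    have e2 : l₂.re = 1 := by push_cast at hre; nlinarith
    have := hc₁ (by linarith)
    have := hd₂ (by linarith)
    linarith
  · rw [hn']; simp
  · exfalso
    have e1 : l₁.re = 1 := by push_cast at hre; nlinarith
    have e2 : l₂.re = 0 := by push_cast at hre; nlinarith
    have := hd₁ (by linarith)
    have := hc₂ (by linarith)
    linarith

variable {E : Type*} [NormedAddCommGroup E] [NormedSpace ℂ E] [FiniteDimensional ℂ E]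

/-- If the max generalized eigenspace is nonzero, the eigenvalue is in the spectrum. -/
lemma mem_spectrum_of_maxGenEigenspace_ne_bot (α : E →L[ℂ] E) (l : ℂ)
    (h : Module.End.maxGenEigenspace (α : E →ₗ[ℂ] E) l ≠ ⊥) : l ∈ spectrum ℂ α := by
  have h1 : Module.End.HasUnifEigenvalue (α : E →ₗ[ℂ] E) l 1 :=
    Module.End.HasUnifEigenvalue.lt zero_lt_one h
  have h2 : l ∈ spectrum ℂ (α : E →ₗ[ℂ] E) := h1.mem_spectrum
  have h3 : (Module.End.toContinuousLinearMap E (α : E →ₗ[ℂ] E)) = α := by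
    ext x; rfl
  rw [← h3]
  rwa [AlgEquiv.spectrum_eq (Module.End.toContinuousLinearMap E) (α : E →ₗ[ℂ] E)]

end Aux4

section Aux5

variable {E : Type*} [NormedAddCommGroup E] [NormedSpace ℂ E] [FiniteDimensional ℂ E]

lemma end_sub_smul_pow_apply (γ : E →L[ℂ] E) (c : ℂ) (m : ℕ) (z : E) :
    (((γ : E →ₗ[ℂ] E) - c • (1 : E →ₗ[ℂ] E)) ^ m) z
      = ((γ - c • (1 : E →L[ℂ] E)) ^ m) z := by
  induction m generalizing z with
  | zero => rfl
  | succ m ih =>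
    rw [pow_succ', pow_succ', Module.End.mul_apply, ContinuousLinearMap.mul_apply, ih]
    simp

end Aux5


/-- A subspace `Ẽ` is preserved by `α` iff it is preserved by `exp(2πi·α)`,
provided the spectrum of `α` is contained in Σ₁. -/
theorem mapsTo_iff_expEnd_mapsTo
    {E : Type*} [NormedAddCommGroup E] [NormedSpace ℂ E] [FiniteDimensional ℂ E]
    (α : E →L[ℂ] E) (hα : spectrum ℂ α ⊆ Sigma1) (Et : Submodule ℂ E) :
    (∀ x ∈ Et, α x ∈ Et) ↔ (∀ x ∈ Et, expEnd α x ∈ Et) := by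
  constructor
  · -- forward direction
    intro h x hx
    have hxpow : ∀ n : ℕ, ((twoPiI • α) ^ n) x ∈ Et := by
      intro n
      induction n with
      | zero => simpa using hx
      | succ n ih =>
        rw [pow_succ', ContinuousLinearMap.mul_apply, ContinuousLinearMap.smul_apply]
        exact Et.smul_mem _ (h _ ih)
    have hs := hasSum_expEnd_apply (twoPiI • α) x
    have hcl : IsClosed (Et : Set E) := Submodule.closed_of_finiteDimensional Et
    show NormedSpace.exp (twoPiI • α) x ∈ Et
    exact hcl.mem_of_tendsto hs (Filter.Eventually.of_forall fun s =>
      Submodule.sum_mem _ fun n _ => Submodule.smul_mem _ _ (hxpow n))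
  · -- reverse direction
    intro h x hx
    set A := (α : E →ₗ[ℂ] E) with hAdef
    set B := ((expEnd α : E →L[ℂ] E) : E →ₗ[ℂ] E) with hBdef
    have hrestrict : ∀ v : E, v ∈ Et → B v ∈ Et := fun v hv => h v hv
    -- the inclusion of generalized eigenspaces
    have hAB : ∀ l : ℂ, Module.End.maxGenEigenspace A l
        ≤ Module.End.maxGenEigenspace B (Complex.exp (twoPiI * l)) := by
      intro l z hz
      rw [Module.End.mem_maxGenEigenspace] at hz ⊢
      obtain ⟨m, hm⟩ := hz
      refine ⟨m, ?_⟩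
      rw [end_sub_smul_pow_apply] at hm ⊢
      exact exp_sub_pow_apply_zero α l m z hm
    -- decomposition of x along generalized eigenspaces of B within Et
    have hx2 : x ∈ ⨆ μ : ℂ, Et ⊓ Module.End.maxGenEigenspace B μ := by
      have h1 : (⟨x, hx⟩ : Et) ∈ (⊤ : Submodule ℂ Et) := trivial
      rw [← Module.End.iSup_maxGenEigenspace_eq_top (LinearMap.restrict B hrestrict)] at h1
      have h2 := Submodule.mem_map_of_mem (f := Et.subtype) h1
      rw [Submodule.map_iSup] at h2
      have h3 : ∀ μ : ℂ,
          Submodule.map Et.subtype (Module.End.maxGenEigenspace (LinearMap.restrict B hrestrict) μ)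
            = Et ⊓ Module.End.maxGenEigenspace B μ :=
        fun μ => (Submodule.inf_genEigenspace B Et hrestrict).symm
      rw [iSup_congr h3] at h2
      simpa using h2
    suffices hcomp : ∀ μ : ℂ, (Et ⊓ Module.End.maxGenEigenspace B μ)
        ≤ Submodule.comap A Et by
      have := (iSup_le hcomp) hx2
      simpa [hAdef] using this
    intro μ₀
    have hdisj : Disjoint (Module.End.maxGenEigenspace B μ₀)
        (⨆ ν, ⨆ (_ : ν ≠ μ₀), Module.End.maxGenEigenspace B ν) :=
      Module.End.independent_maxGenEigenspace B μ₀
    by_cases hex : ∃ l₀ : ℂ, Module.End.maxGenEigenspace A l₀ ≠ ⊥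
        ∧ Complex.exp (twoPiI * l₀) = μ₀
    · obtain ⟨l₀, hl₀ne, hl₀⟩ := hex
      have hrest : (⨆ l : ℂ, ⨆ (_ : l ≠ l₀), Module.End.maxGenEigenspace A l)
          ≤ ⨆ ν : ℂ, ⨆ (_ : ν ≠ μ₀), Module.End.maxGenEigenspace B ν := by
        refine iSup₂_le fun l hl => ?_
        by_cases hbot : Module.End.maxGenEigenspace A l = ⊥
        · rw [hbot]; exact bot_le
        · have hlS : l ∈ Sigma1 := hα (mem_spectrum_of_maxGenEigenspace_ne_bot α l hbot)
          have hl₀S : l₀ ∈ Sigma1 := hα (mem_spectrum_of_maxGenEigenspace_ne_bot α l₀ hl₀ne)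
          have hne : Complex.exp (twoPiI * l) ≠ μ₀ := by
            rw [← hl₀]
            intro hcon
            exact hl (sigma1_exp_injOn hlS hl₀S hcon)
          exact le_trans (hAB l) (le_iSup₂_of_le (Complex.exp (twoPiI * l)) hne le_rfl)
      have htopA : (⊤ : Submodule ℂ E) ≤ Module.End.maxGenEigenspace A l₀
          ⊔ ⨆ l : ℂ, ⨆ (_ : l ≠ l₀), Module.End.maxGenEigenspace A l := by
        rw [← Module.End.iSup_maxGenEigenspace_eq_top A]
        refine iSup_le fun l => ?_
        by_cases hll : l = l₀
        · subst hll; exact le_sup_left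
        · exact le_trans (le_iSup₂_of_le l hll le_rfl) le_sup_right
      have hsub : Module.End.maxGenEigenspace B μ₀ ≤ Module.End.maxGenEigenspace A l₀ := by
        have hac : Module.End.maxGenEigenspace A l₀ ≤ Module.End.maxGenEigenspace B μ₀ :=
          hl₀ ▸ hAB l₀
        have h2 := sup_inf_assoc_of_le
          (x := Module.End.maxGenEigenspace A l₀)
          (⨆ l : ℂ, ⨆ (_ : l ≠ l₀), Module.End.maxGenEigenspace A l)
          (z := Module.End.maxGenEigenspace B μ₀) hac
        have h3 : (⨆ l : ℂ, ⨆ (_ : l ≠ l₀), Module.End.maxGenEigenspace A l)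
            ⊓ Module.End.maxGenEigenspace B μ₀ = ⊥ := by
          rw [inf_comm]
          exact (hdisj.mono_right hrest).eq_bot
        have h4 : Module.End.maxGenEigenspace B μ₀
            = (Module.End.maxGenEigenspace A l₀
              ⊔ ⨆ l : ℂ, ⨆ (_ : l ≠ l₀), Module.End.maxGenEigenspace A l)
              ⊓ Module.End.maxGenEigenspace B μ₀ := by
          rw [inf_eq_right.mpr (le_trans le_top htopA)]
        rw [h4, h2, h3, sup_bot_eq]
      rintro z ⟨hzV, hzB⟩
      have hzA : z ∈ Module.End.maxGenEigenspace A l₀ := hsub hzB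
      rw [Module.End.mem_maxGenEigenspace] at hzA
      obtain ⟨m, hm⟩ := hzA
      rw [end_sub_smul_pow_apply] at hm
      rw [Submodule.mem_comap]
      exact alpha_apply_mem α Et h l₀ hzV hm
    · push_neg at hex
      have htople : (⊤ : Submodule ℂ E)
          ≤ ⨆ ν : ℂ, ⨆ (_ : ν ≠ μ₀), Module.End.maxGenEigenspace B ν := by
        rw [← Module.End.iSup_maxGenEigenspace_eq_top A]
        refine iSup_le fun l => ?_
        by_cases hbot : Module.End.maxGenEigenspace A l = ⊥
        · rw [hbot]; exact bot_le
        · exact le_trans (hAB l)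
            (le_iSup₂_of_le (Complex.exp (twoPiI * l)) (hex l hbot) le_rfl)
      have hBbot : Module.End.maxGenEigenspace B μ₀ = ⊥ :=
        disjoint_top.mp (hdisj.mono_right htople)
      rintro z ⟨hzV, hzB⟩
      rw [hBbot] at hzB
      simp only [Submodule.bot_coe, Set.mem_singleton_iff] at hzB
      subst hzB
      simp
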